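/- For every natural number k ≥ 1, consider the network with nodes V = {s, v, t} ∪ {w_i^j : i ∈ [k], j ∈ [k−1]} (so n = k(k−1)+3 nodes) and arcs A = {(s,v)} ∪ {(v, w_i^1), (w_i^{k−1}, t) : i ∈ [k]} ∪ {(w_i^{j−1}, w_i^j) : i ∈ [k], 2 ≤ j ≤ k−1}, where all capacities and transit times equal 1, the cost of arc (w_i^{i−1}, w_i^i) equals 1 for each i ∈ [k] (with the convention w_i^0 = v and w_i^k = t) and all other costs are 0, with time horizon T = k+2 and demand D = 1. Then every integral temporally repeated flow of value 1 with time horizon T has peak cost exactly 1, while there exists a fractional temporally repeated flow of value 1 with time horizon T whose peak cost equals 1/k. Hence the peak cost of an optimal integral solution is, in the worst case, at least a factor k ∈ Ω(√n) larger than the optimal fractional peak cost. -/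

import Mathlib

open MeasureTheory

/-- A network over time: a digraph with arc capacities `u`, costs `c`,
transit times `τ`, a source `s` and a sink `t`. -/
structure Network (V : Type) (A : Type) where
  tail : A → V
  head : A → V
  u : A → ℕ
  c : A → ℕ
  τ : A → ℕ
  s : V
  t : V

namespace Network

variable {V A : Type}

/-- The node sequence visited by a list of arcs. -/
def nodes (N : Network V A) : List A → List V
  | [] => []
  | a :: rest => N.tail a :: ((a :: rest).map N.head)

/-- `p` is a simple `s`-`t` path (a non-empty list of consecutive arcs starting at
the source, ending at the sink and visiting pairwise distinct nodes). -/
def IsSTPath (N : Network V A) (p : List A) : Prop :=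
  p ≠ [] ∧ List.Chain' (fun a b => N.head a = N.tail b) p ∧
    (∀ a ∈ p.head?, N.tail a = N.s) ∧ (∀ a ∈ p.getLast?, N.head a = N.t) ∧
    (N.nodes p).Nodup

/-- `p` is a non-empty closed walk, i.e. a cycle. -/
def IsCycle (N : Network V A) (p : List A) : Prop :=
  p ≠ [] ∧ List.Chain' (fun a b => N.head a = N.tail b) p ∧
    ∀ a ∈ p.head?, ∀ b ∈ p.getLast?, N.head b = N.tail a

/-- The network contains no directed cycle. -/
def Acyclic (N : Network V A) : Prop := ∀ p : List A, ¬ N.IsCycle p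

/-- Transit time (length) of a path. -/
def pathTime (N : Network V A) (p : List A) : ℕ := (p.map N.τ).sum

/-- Bottleneck capacity of a path. -/
noncomputable def bottleneck (N : Network V A) (p : List A) : ℕ :=
  sInf (N.u '' {a | a ∈ p})

section
variable [DecidableEq A]

/-- Transit time of the part of `p` strictly before arc `a`. -/
def prefixTime (N : Network V A) (p : List A) (a : A) : ℕ :=
  ((p.takeWhile fun b => b ≠ a).map N.τ).sum

/-- Transit time of the part of `p` from arc `a` onwards. -/
def suffixTime (N : Network V A) (p : List A) (a : A) : ℕ :=
  ((p.dropWhile fun b => b ≠ a).map N.τ).sum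

/-- Inflow rate into arc `a` at time `θ` of the temporally repeated flow with
horizon `T` induced by the path decomposition `y`. -/
noncomputable def trRate (N : Network V A) (y : List A → ℝ) (T : ℝ) (a : A) (θ : ℝ) : ℝ :=
  ∑ᶠ p ∈ {p : List A | N.IsSTPath p ∧ (N.pathTime p : ℝ) ≤ T ∧ a ∈ p ∧
    (N.prefixTime p a : ℝ) ≤ θ ∧ (N.suffixTime p a : ℝ) < T - θ}, y p

/-- Static flow on arc `a` induced by the path decomposition `y`. -/
noncomputable def staticOf (N : Network V A) (y : List A → ℝ) (a : A) : ℝ :=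
  ∑ᶠ p ∈ {p : List A | a ∈ p}, y p

/-- `y` is a feasible (capacity-respecting) path decomposition of a static flow. -/
def IsDecomposition (N : Network V A) (y : List A → ℝ) : Prop :=
  (∀ p, 0 ≤ y p) ∧ (∀ p, y p ≠ 0 → N.IsSTPath p) ∧
    (Function.support y).Finite ∧ ∀ a : A, N.staticOf y a ≤ N.u a

/-- Value of the temporally repeated flow induced by `y` with horizon `T`. -/
noncomputable def trValue (N : Network V A) (y : List A → ℝ) (T : ℝ) : ℝ :=
  ∑ᶠ p ∈ {p : List A | N.IsSTPath p ∧ (N.pathTime p : ℝ) ≤ T}, y p * (T - N.pathTime p)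

/-- Amount of flow of the TR flow induced by `y` that has reached the sink by time `θ`. -/
noncomputable def arrTR (N : Network V A) (y : List A → ℝ) (θ : ℝ) : ℝ :=
  ∑ᶠ p ∈ {p : List A | N.IsSTPath p ∧ (N.pathTime p : ℝ) ≤ θ}, y p * (θ - N.pathTime p)

end

/-- All flow rates of the decomposition are (nonnegative) integers. -/
def IsIntegral (y : List A → ℝ) : Prop := ∀ p, ∃ n : ℕ, y p = n

section
variable [Fintype A]

/-- Cost of a flow over time `f` at time point `θ`. -/
noncomputable def costAt (N : Network V A) (f : A → ℝ → ℝ) (θ : ℝ) : ℝ :=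
  ∑ a : A, (N.c a : ℝ) * ∫ ξ in (θ - (N.τ a : ℝ))..θ, f a ξ

/-- Peak cost of a flow over time `f` with horizon `T`. -/
noncomputable def peakCost (N : Network V A) (f : A → ℝ → ℝ) (T : ℝ) : ℝ :=
  sSup (N.costAt f '' Set.Ico 0 T)

/-- Peak cost of the TR flow induced by the decomposition `y`. -/
noncomputable def trPeakCost [DecidableEq A] (N : Network V A) (y : List A → ℝ) (T : ℝ) : ℝ :=
  N.peakCost (N.trRate y T) T

variable [DecidableEq V]

/-- Cumulative flow having entered node `v` by time `θ`. -/
noncomputable def inflowBy (N : Network V A) (f : A → ℝ → ℝ) (v : V) (θ : ℝ) : ℝ :=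
  ∑ a ∈ Finset.univ.filter (fun a => N.head a = v), ∫ ξ in (0:ℝ)..(θ - (N.τ a : ℝ)), f a ξ

/-- Cumulative flow having left node `v` by time `θ`. -/
noncomputable def outflowBy (N : Network V A) (f : A → ℝ → ℝ) (v : V) (θ : ℝ) : ℝ :=
  ∑ a ∈ Finset.univ.filter (fun a => N.tail a = v), ∫ ξ in (0:ℝ)..θ, f a ξ

/-- A feasible flow over time with horizon `T`. -/
def IsFlowOverTime (N : Network V A) (T : ℝ) (f : A → ℝ → ℝ) : Prop :=
  (∀ a, Measurable (f a)) ∧ (∀ a θ, 0 ≤ f a θ) ∧ (∀ a θ, f a θ ≤ N.u a) ∧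
    (∀ a θ, T - (N.τ a : ℝ) < θ → f a θ = 0) ∧ (∀ a θ, θ < 0 → f a θ = 0) ∧
    ∀ v, v ≠ N.s → v ≠ N.t → ∀ θ ∈ Set.Ico (0:ℝ) T,
      N.outflowBy f v θ ≤ N.inflowBy f v θ

/-- Value of a flow over time with horizon `T`. -/
noncomputable def fotValue (N : Network V A) (T : ℝ) (f : A → ℝ → ℝ) : ℝ :=
  N.outflowBy f N.s T - N.inflowBy f N.s T

/-- Amount of flow of a flow over time arrived at the sink by time `θ`. -/
noncomputable def arrivedBy (N : Network V A) (f : A → ℝ → ℝ) (θ : ℝ) : ℝ :=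
  N.inflowBy f N.t θ - N.outflowBy f N.t θ

/-- Feasibility of a static `s`-`t` flow. -/
def IsStaticFlow (N : Network V A) (x : A → ℝ) : Prop :=
  (∀ a, 0 ≤ x a) ∧ (∀ a, x a ≤ N.u a) ∧
    ∀ v, v ≠ N.s → v ≠ N.t →
      ∑ a ∈ Finset.univ.filter (fun a => N.head a = v), x a =
      ∑ a ∈ Finset.univ.filter (fun a => N.tail a = v), x a

/-- Value of a static `s`-`t` flow. -/
noncomputable def staticValue (N : Network V A) (x : A → ℝ) : ℝ :=
  ∑ a ∈ Finset.univ.filter (fun a => N.tail a = N.s), x a -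
  ∑ a ∈ Finset.univ.filter (fun a => N.head a = N.s), x a

end

end Network

open Network

/-- Node type for the network of Lemma 2.11: `Sum.inl 0 = s`, `Sum.inl 1 = v`,
`Sum.inl 2 = t` and `Sum.inr (i, j) = wᵢʲ`. -/
abbrev V₂ : Type := Fin 3 ⊕ ℕ × ℕ

/-- The node `wᵢʲ` (with the convention `wᵢ⁰ = v` and `wᵢᵏ = t`). -/
def wNode (k i j : ℕ) : V₂ :=
  if j = 0 then Sum.inl 1 else if j = k then Sum.inl 2 else Sum.inr (i, j)

/-- The network of Lemma 2.11 for a parameter `k`: node `v` is joined to `t` by `k`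
internally disjoint paths of length `k` each; the arc `none` is `(s, v)` and the arc
`some (i, j)` goes from `wᵢʲ` to `wᵢʲ⁺¹`.  All capacities and transit times are `1`;
the `(i+1)`-st arc of the `(i+1)`-st `v`-`t` path has cost `1`, all other costs are `0`. -/
def N₂ (k : ℕ) : Network V₂ (Option (Fin k × Fin k)) where
  tail := fun e => match e with
    | none => Sum.inl 0
    | some (i, j) => wNode k i j
  head := fun e => match e with
    | none => Sum.inl 1
    | some (i, j) => wNode k i (j + 1)
  u := fun _ => 1
  τ := fun _ => 1
  c := fun e => match e with
    | none => 0
    | some (i, j) => if (j : ℕ) = (i : ℕ) then 1 else 0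
  s := Sum.inl 0
  t := Sum.inl 2

namespace Stmt2

/-- The `i`-th `s`-`t` path in `N₂ k`. -/
def pathOf (k : ℕ) (i : Fin k) : List (Option (Fin k × Fin k)) :=
  none :: (List.finRange k).map fun j => some (i, j)

variable {k : ℕ}

lemma wNode_ne_s (i j : ℕ) : wNode k i j ≠ Sum.inl 0 := by
  unfold wNode; split_ifs <;> simp

lemma wNode_eq_v_iff (i j : ℕ) (hk : 0 < k) (hj : j ≤ k) :
    wNode k i j = Sum.inl 1 ↔ j = 0 := by
  unfold wNode; split_ifs with h1 h2
  · simp [h1]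
  · constructor
    · intro h; exact absurd (Sum.inl.inj h) (by decide)
    · omega
  · simp; omega

lemma wNode_eq_t_iff (i j : ℕ) (hk : 0 < k) (hj : j ≤ k) :
    wNode k i j = Sum.inl 2 ↔ j = k := by
  unfold wNode; split_ifs with h1 h2
  · constructor
    · intro h; exact absurd (Sum.inl.inj h) (by decide)
    · omega
  · simp [h2]
  · simp; omega

lemma chain_suffix : ∀ (q : List (Option (Fin k × Fin k))) (i j : Fin k),
    List.Chain' (fun a b => (N₂ k).head a = (N₂ k).tail b) (some (i,j) :: q) →
    (∀ a ∈ (some (i,j) :: q).getLast?, (N₂ k).head a = (N₂ k).t) →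
    some (i,j) :: q = ((List.finRange k).drop (j : ℕ)).map fun j' => some (i, j') := by
  intro q
  induction q with
  | nil =>
    intro i j _ hlast
    have h2 : (N₂ k).head (some (i, j)) = (N₂ k).t := hlast _ (by simp)
    have hj : (j : ℕ) + 1 = k :=
      (wNode_eq_t_iff (k := k) i ((j : ℕ) + 1) j.pos (by omega)).mp h2
    have h1 : (j : ℕ) < (List.finRange k).length := by simp [j.isLt]
    rw [List.drop_eq_getElem_cons h1]
    simp [hj]
  | cons b q ih =>
    intro i j hchain hlast
    obtain ⟨hab, hchain'⟩ := List.isChain_cons_cons.mp hchain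
    obtain ⟨⟨i', j'⟩, rfl⟩ : ∃ x : Fin k × Fin k, b = some x := by
      cases b with
      | none =>
        exfalso
        have : wNode k i ((j:ℕ)+1) = Sum.inl 0 := by simpa [N₂] using hab
        exact wNode_ne_s _ _ this
      | some x => exact ⟨x, rfl⟩
    have hab' : wNode k i ((j:ℕ)+1) = wNode k i' (j' : ℕ) := by simpa [N₂] using hab
    unfold wNode at hab'
    have key : (j:ℕ) + 1 < k ∧ i = i' ∧ (j' : ℕ) = (j : ℕ) + 1 := by
      by_cases hjk2 : (j:ℕ) + 1 = k
      · exfalso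
        rw [if_neg (by omega), if_pos hjk2] at hab'
        by_cases hz : (j' : ℕ) = 0
        · rw [if_pos hz] at hab'; exact absurd (Sum.inl.inj hab') (by decide)
        · rw [if_neg hz, if_neg (by omega)] at hab'; simp at hab'
      · rw [if_neg (by omega), if_neg hjk2] at hab'
        by_cases hz : (j' : ℕ) = 0
        · rw [if_pos hz] at hab'; simp at hab'
        · rw [if_neg hz, if_neg (by omega)] at hab'
          obtain ⟨h1, h2⟩ := Prod.mk.injEq .. ▸ Sum.inr.inj hab'
          exact ⟨by omega, Fin.ext h1, h2.symm⟩
    obtain ⟨hlt, rfl, hj'⟩ := key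
    have hj'eq : j' = ⟨(j:ℕ)+1, hlt⟩ := Fin.ext hj'
    subst hj'eq
    have hrec := ih i ⟨(j:ℕ)+1, hlt⟩ hchain'
      (by intro a ha; exact hlast a (by rw [List.getLast?_cons_cons]; exact ha))
    have h1 : (j : ℕ) < (List.finRange k).length := by simp [j.isLt]
    rw [List.drop_eq_getElem_cons h1, List.map_cons]
    have hget : (List.finRange k)[(j:ℕ)] = j := by simp
    rw [hget]
    exact congrArg (List.cons _) (by simpa using hrec)


lemma pathOf_nodes (i : Fin k) :
    (N₂ k).nodes (pathOf k i) = Sum.inl 0 :: Sum.inl 1 ::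
        (List.finRange k).map (fun j : Fin k => wNode k (i:ℕ) ((j:ℕ)+1)) := by
  show Sum.inl 0 :: ((pathOf k i).map (N₂ k).head) = _
  unfold pathOf
  simp only [List.map_cons, List.map_map]
  rfl

lemma wNode_succ_inj (i : Fin k) {a b : Fin k}
    (h : wNode k (i:ℕ) ((a:ℕ)+1) = wNode k (i:ℕ) ((b:ℕ)+1)) : a = b := by
  have ha := a.isLt; have hb := b.isLt
  by_cases h1 : (a:ℕ)+1 = k <;> by_cases h2 : (b:ℕ)+1 = k
  · exact Fin.ext (by omega)
  · exfalso
    unfold wNode at h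
    rw [if_neg (show ¬((a:ℕ)+1 = 0) by omega), if_pos h1,
        if_neg (show ¬((b:ℕ)+1 = 0) by omega), if_neg h2] at h
    simp at h
  · exfalso
    unfold wNode at h
    rw [if_neg (show ¬((a:ℕ)+1 = 0) by omega), if_neg h1,
        if_neg (show ¬((b:ℕ)+1 = 0) by omega), if_pos h2] at h
    simp at h
  · unfold wNode at h
    rw [if_neg (show ¬((a:ℕ)+1 = 0) by omega), if_neg h1,
        if_neg (show ¬((b:ℕ)+1 = 0) by omega), if_neg h2] at h
    have := (Prod.mk.injEq .. ▸ Sum.inr.inj h).2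
    exact Fin.ext (by omega)

lemma isSTPath_pathOf (i : Fin k) : (N₂ k).IsSTPath (pathOf k i) := by
  obtain ⟨k', rfl⟩ : ∃ k', k = k' + 1 := ⟨k - 1, by have := i.pos; omega⟩
  refine ⟨by simp [pathOf], ?_, ?_, ?_, ?_⟩
  · unfold pathOf
    rw [show List.Chain' _ _ = List.IsChain _ _ from rfl, List.isChain_cons]
    constructor
    · intro b hb
      rw [List.finRange_succ] at hb
      simp only [List.map_cons, List.head?_cons, Option.mem_def, Option.some.injEq] at hb
      subst hb
      show (N₂ _).head none = (N₂ _).tail (some (i, 0))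
      simp [N₂, wNode]
    · rw [List.isChain_map, List.isChain_iff_getElem]
      intro m hm
      simp only [List.length_finRange] at hm
      rw [List.getElem_finRange, List.getElem_finRange]
      rfl
  · intro a ha
    simp only [pathOf, List.head?_cons, Option.mem_def, Option.some.injEq] at ha
    subst ha; rfl
  · intro a ha
    unfold pathOf at ha
    rw [List.getLast?_cons, List.getLast?_map] at ha
    rw [List.getLast?_eq_getElem?] at ha
    simp only [List.length_finRange] at ha
    rw [List.getElem?_eq_getElem (by simp)] at ha
    have hel : ((List.finRange (k'+1))[k'+1-1] : Fin (k'+1)) = ⟨k', by omega⟩ := by simp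
    rw [hel] at ha
    simp only [Option.map_some, Option.getD_some, Option.mem_def, Option.some.injEq] at ha
    subst ha
    show wNode (k'+1) (i:ℕ) (k'+1) = Sum.inl 2
    rw [wNode_eq_t_iff _ _ (by omega) (by omega)]
  · rw [pathOf_nodes]
    refine List.nodup_cons.mpr ⟨?_, List.nodup_cons.mpr ⟨?_, ?_⟩⟩
    · simp only [List.mem_cons, List.mem_map, not_or]
      refine ⟨by simp, ?_⟩
      rintro ⟨j, -, hj⟩
      exact wNode_ne_s _ _ hj
    · simp only [List.mem_map, not_exists]
      rintro j ⟨-, hj⟩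
      have := (wNode_eq_v_iff (k := k'+1) i ((j:ℕ)+1) (by omega)
        (by have := j.isLt; omega)).mp hj
      omega
    · exact List.Nodup.map (fun a b h => wNode_succ_inj i h) (List.nodup_finRange _)

lemma isSTPath_iff {p : List (Option (Fin k × Fin k))} :
    (N₂ k).IsSTPath p ↔ ∃ i, p = pathOf k i := by
  constructor
  · rintro ⟨hne, hchain, hhead, hlast, -⟩
    obtain ⟨a, rest, rfl⟩ : ∃ a rest, p = a :: rest := by
      cases p with
      | nil => exact absurd rfl hne
      | cons a rest => exact ⟨a, rest, rfl⟩
    have ha : (N₂ k).tail a = Sum.inl 0 := hhead a (by simp)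
    obtain rfl : a = none := by
      cases a with
      | none => rfl
      | some x => exact absurd ha (wNode_ne_s _ _)
    cases rest with
    | nil =>
      exfalso
      have := hlast none (by simp)
      simp [N₂] at this
    | cons b q =>
      obtain ⟨hab, hchain'⟩ := List.isChain_cons_cons.mp hchain
      obtain ⟨⟨i, j⟩, rfl⟩ : ∃ x : Fin k × Fin k, b = some x := by
        cases b with
        | none => simp [N₂] at hab
        | some x => exact ⟨x, rfl⟩
      have hab' : wNode k (i:ℕ) (j:ℕ) = Sum.inl 1 := by
        have h2 : (N₂ k).head none = (N₂ k).tail (some (i, j)) := hab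
        simpa [N₂] using h2.symm
      have hj0 : (j : ℕ) = 0 := (wNode_eq_v_iff _ _ j.pos (le_of_lt j.isLt)).mp hab'
      have hq := chain_suffix q i j hchain'
        (by intro x hx; exact hlast x (by rw [List.getLast?_cons_cons]; exact hx))
      refine ⟨i, ?_⟩
      unfold pathOf
      rw [hq, hj0]
      simp
  · rintro ⟨i, rfl⟩; exact isSTPath_pathOf i


lemma pathOf_injective : Function.Injective (pathOf k) := by
  intro i i' h
  simp only [pathOf, List.cons.injEq, true_and] at h
  have hm : some (i, (⟨0, i.pos⟩ : Fin k)) ∈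
      (List.finRange k).map (fun j => some (i, j)) :=
    List.mem_map_of_mem (List.mem_finRange _)
  rw [h] at hm
  obtain ⟨j', -, hj'⟩ := List.mem_map.mp hm
  exact (Prod.mk.injEq .. ▸ Option.some.inj hj').1.symm

lemma none_mem_pathOf (i : Fin k) : none ∈ pathOf k i := by simp [pathOf]

lemma some_mem_pathOf_iff {i i' : Fin k} {j : Fin k} :
    some (i, j) ∈ pathOf k i' ↔ i' = i := by
  constructor
  · intro hm
    simp only [pathOf, List.mem_cons, List.mem_map] at hm
    obtain h | ⟨j', -, hj'⟩ := hm
    · exact absurd h (by simp)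
    · exact (Prod.mk.injEq .. ▸ Option.some.inj hj').1
  · rintro rfl
    exact List.mem_cons_of_mem _ (List.mem_map_of_mem (List.mem_finRange j))

lemma sum_map_one {α : Type*} (l : List α) : (l.map (fun _ => (1:ℕ))).sum = l.length := by
  induction l <;> simp_all <;> omega

lemma pathTime_pathOf (i : Fin k) : (N₂ k).pathTime (pathOf k i) = k + 1 := by
  show ((pathOf k i).map (N₂ k).τ).sum = k + 1
  have : (N₂ k).τ = fun _ => 1 := rfl
  rw [this, sum_map_one]
  simp [pathOf]

lemma takeWhile_dropWhile_eq {α : Type*} [DecidableEq α] (l₁ l₂ : List α) (a : α)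
    (h : a ∉ l₁) :
    (l₁ ++ a :: l₂).takeWhile (fun b => b ≠ a) = l₁ ∧
    (l₁ ++ a :: l₂).dropWhile (fun b => b ≠ a) = a :: l₂ := by
  induction l₁ with
  | nil => simp
  | cons x l ih =>
    have hxa : x ≠ a := fun e => h (by simp [e])
    have h' : a ∉ l := fun e => h (by simp [e])
    rw [List.cons_append, List.takeWhile_cons, List.dropWhile_cons]
    rw [if_pos (by simp [hxa]), if_pos (by simp [hxa])]
    refine ⟨?_, (ih h').2⟩
    rw [(ih h').1]

lemma mem_take_finRange {j' : Fin k} {n' : ℕ} (h : j' ∈ (List.finRange k).take n') :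
    (j' : ℕ) < n' := by
  obtain ⟨m, hm, hg⟩ := List.mem_iff_getElem.mp h
  rw [List.getElem_take, List.getElem_finRange] at hg
  rw [List.length_take, List.length_finRange] at hm
  have hv : (j' : ℕ) = m := by rw [← hg]; rfl
  omega

lemma pathOf_decomp (i : Fin k) (j : Fin k) :
    pathOf k i = (none :: ((List.finRange k).take (j:ℕ)).map (fun j' => some (i, j'))) ++
      some (i, j) :: ((List.finRange k).drop ((j:ℕ)+1)).map (fun j' => some (i, j')) := by
  unfold pathOf
  rw [List.cons_append]
  congr 1
  conv_lhs => rw [← List.take_append_drop (j:ℕ) (List.finRange k)]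
  rw [List.map_append]
  congr 1
  rw [List.drop_eq_getElem_cons (by simp [j.isLt])]
  simp

lemma some_notmem_prefix (i : Fin k) (j : Fin k) :
    some (i, j) ∉ none :: ((List.finRange k).take (j:ℕ)).map
      (fun j' => some (i, j')) := by
  simp only [List.mem_cons, List.mem_map, not_or, not_exists]
  refine ⟨by simp, ?_⟩
  rintro j' ⟨hj', he⟩
  have h1 := mem_take_finRange hj'
  have h2 := (Prod.mk.injEq .. ▸ Option.some.inj he).2
  rw [h2] at h1
  omega

lemma prefixTime_pathOf (i j : Fin k) :
    (N₂ k).prefixTime (pathOf k i) (some (i, j)) = (j:ℕ) + 1 := by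
  unfold Network.prefixTime
  rw [pathOf_decomp i j, (takeWhile_dropWhile_eq _ _ _ (some_notmem_prefix i j)).1]
  have : (N₂ k).τ = fun _ => 1 := rfl
  rw [this, sum_map_one]
  simp only [List.length_cons, List.length_map, List.length_take, List.length_finRange]
  have := j.isLt
  omega

lemma suffixTime_pathOf (i j : Fin k) :
    (N₂ k).suffixTime (pathOf k i) (some (i, j)) = k - (j:ℕ) := by
  unfold Network.suffixTime
  rw [pathOf_decomp i j, (takeWhile_dropWhile_eq _ _ _ (some_notmem_prefix i j)).2]
  have : (N₂ k).τ = fun _ => 1 := rfl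
  rw [this, sum_map_one]
  simp only [List.length_cons, List.length_map, List.length_drop, List.length_finRange]
  have := j.isLt
  omega


lemma finsum_mem_paths (g : List (Option (Fin k × Fin k)) → ℝ)
    (hg : ∀ p, g p ≠ 0 → ∃ i, p = pathOf k i)
    (S : Set (List (Option (Fin k × Fin k)))) :
    ∑ᶠ p ∈ S, g p = ∑ i : Fin k, S.indicator g (pathOf k i) := by
  rw [finsum_mem_def]
  rw [finsum_eq_sum_of_support_subset (S.indicator g)
    (s := Finset.univ.image (pathOf k)) ?hsub]
  case hsub =>
    intro p hp
    have hgp : g p ≠ 0 := fun h0 => hp (by simp [Set.indicator_apply_eq_zero, h0])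
    obtain ⟨i, rfl⟩ := hg p hgp
    simp
  rw [Finset.sum_image (fun a _ b _ h => pathOf_injective h)]

lemma trValue_eq (y : List (Option (Fin k × Fin k)) → ℝ)
    (hy : ∀ p, y p ≠ 0 → ∃ i, p = pathOf k i) :
    (N₂ k).trValue y ((k + 2 : ℕ) : ℝ) = ∑ i : Fin k, y (pathOf k i) := by
  unfold Network.trValue
  rw [finsum_mem_paths _ (fun p hp => hy p (by intro h0; simp [h0] at hp)) _]
  refine Finset.sum_congr rfl fun i _ => ?_
  rw [Set.indicator_of_mem]
  · rw [pathTime_pathOf]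
    push_cast
    ring
  · exact ⟨isSTPath_pathOf i, by rw [pathTime_pathOf]; push_cast; linarith⟩

lemma trRate_eq (y : List (Option (Fin k × Fin k)) → ℝ)
    (hy : ∀ p, y p ≠ 0 → ∃ i, p = pathOf k i) (i : Fin k) (θ : ℝ) :
    (N₂ k).trRate y ((k + 2 : ℕ) : ℝ) (some (i, i)) θ =
      y (pathOf k i) * (Set.Ico ((i:ℕ)+1 : ℝ) ((i:ℕ)+2)).indicator 1 θ := by
  unfold Network.trRate
  rw [finsum_mem_paths _ hy _]
  rw [Finset.sum_eq_single i]
  · by_cases hθ : ((i:ℕ)+1 : ℝ) ≤ θ ∧ θ < ((i:ℕ)+2 : ℝ)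
    · have hm : pathOf k i ∈ {p : List (Option (Fin k × Fin k)) | (N₂ k).IsSTPath p ∧
          ((N₂ k).pathTime p : ℝ) ≤ ((k+2:ℕ):ℝ) ∧
          some (i,i) ∈ p ∧
          ((N₂ k).prefixTime p (some (i,i)) : ℝ) ≤ θ ∧
          ((N₂ k).suffixTime p (some (i,i)) : ℝ) < ((k+2:ℕ):ℝ) - θ} := by
        simp only [Set.mem_setOf_eq]
        refine ⟨isSTPath_pathOf i, ?_, some_mem_pathOf_iff.mpr rfl, ?_, ?_⟩
        · rw [pathTime_pathOf]; push_cast; linarith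
        · rw [prefixTime_pathOf]; push_cast; exact hθ.1
        · rw [suffixTime_pathOf]
          have hik := i.isLt
          rw [Nat.cast_sub (by omega)]
          push_cast
          linarith [hθ.2]
      rw [Set.indicator_of_mem hm, Set.indicator_of_mem (Set.mem_Ico.mpr hθ)]
      simp
    · have hn : pathOf k i ∉ {p : List (Option (Fin k × Fin k)) | (N₂ k).IsSTPath p ∧
          ((N₂ k).pathTime p : ℝ) ≤ ((k+2:ℕ):ℝ) ∧
          some (i,i) ∈ p ∧
          ((N₂ k).prefixTime p (some (i,i)) : ℝ) ≤ θ ∧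
          ((N₂ k).suffixTime p (some (i,i)) : ℝ) < ((k+2:ℕ):ℝ) - θ} := by
        simp only [Set.mem_setOf_eq]
        rintro ⟨-, -, -, hpre, hsuf⟩
        rw [prefixTime_pathOf] at hpre
        rw [suffixTime_pathOf] at hsuf
        have hik := i.isLt
        rw [Nat.cast_sub (by omega)] at hsuf
        push_cast at hpre hsuf
        exact hθ ⟨by linarith, by linarith⟩
      rw [Set.indicator_of_notMem hn,
        Set.indicator_of_notMem (fun hc => hθ (Set.mem_Ico.mp hc))]
      simp
  · intro i' _ hne
    rw [Set.indicator_of_notMem]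
    rintro ⟨-, -, hmem, -⟩
    exact hne (some_mem_pathOf_iff.mp hmem)
  · simp


/-- Indicator of the activity interval of the costly arc of path `i`. -/
noncomputable def ind (i : Fin k) : ℝ → ℝ :=
  (Set.Ico ((i:ℕ)+1 : ℝ) ((i:ℕ)+2)).indicator 1

lemma ind_nonneg (i : Fin k) (x : ℝ) : 0 ≤ ind i x :=
  Set.indicator_nonneg (fun _ _ => zero_le_one) x

lemma ind_le_one (i : Fin k) (x : ℝ) : ind i x ≤ 1 := by
  unfold ind
  by_cases hx : x ∈ Set.Ico ((i:ℕ)+1 : ℝ) ((i:ℕ)+2)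
  · rw [Set.indicator_of_mem hx]; rfl
  · rw [Set.indicator_of_notMem hx]; exact zero_le_one

lemma ind_intervalIntegrable (i : Fin k) (a b : ℝ) :
    IntervalIntegrable (ind i) volume a b := by
  refine MeasureTheory.Integrable.intervalIntegrable ?_
  rw [ind, MeasureTheory.integrable_indicator_iff measurableSet_Ico]
  exact MeasureTheory.integrableOn_const measure_Ico_lt_top.ne

lemma J_nonneg (i : Fin k) (θ : ℝ) : 0 ≤ ∫ ξ in (θ-1)..θ, ind i ξ :=
  intervalIntegral.integral_nonneg (by linarith) (fun x _ => ind_nonneg i x)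

lemma J_le_one (i : Fin k) (θ : ℝ) : (∫ ξ in (θ-1)..θ, ind i ξ) ≤ 1 := by
  have h := intervalIntegral.integral_mono_on (a := θ-1) (b := θ) (by linarith)
    (ind_intervalIntegrable i _ _) intervalIntegrable_const
    (fun x _ => ind_le_one i x)
  simpa using h

lemma J_peak (i : Fin k) : (∫ ξ in (((i:ℕ)+2:ℝ)-1)..((i:ℕ)+2:ℝ), ind i ξ) = 1 := by
  have hcong : ∫ ξ in (((i:ℕ)+2:ℝ)-1)..((i:ℕ)+2:ℝ), ind i ξ =
      ∫ ξ in (((i:ℕ)+2:ℝ)-1)..((i:ℕ)+2:ℝ), (1:ℝ) := by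
    apply intervalIntegral.integral_congr_ae
    have hae : ∀ᵐ x : ℝ, x ≠ ((i:ℕ)+2:ℝ) := by
      rw [MeasureTheory.ae_iff]
      simp only [Ne, not_not]
      exact Real.volume_singleton
    filter_upwards [hae] with x hx hmem
    rw [Set.uIoc_of_le (by linarith)] at hmem
    obtain ⟨h1, h2⟩ := hmem
    have : x ∈ Set.Ico ((i:ℕ)+1 : ℝ) ((i:ℕ)+2) := ⟨by linarith, lt_of_le_of_ne h2 hx⟩
    rw [ind, Set.indicator_of_mem this]; rfl
  rw [hcong]
  simp

lemma J_two_of_ne (i : Fin k) (hi : (i:ℕ) ≠ 0) : (∫ ξ in ((2:ℝ)-1)..(2:ℝ), ind i ξ) = 0 := by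
  have hcong : ∫ ξ in ((2:ℝ)-1)..(2:ℝ), ind i ξ = ∫ ξ in ((2:ℝ)-1)..(2:ℝ), (0:ℝ) := by
    apply intervalIntegral.integral_congr_ae
    have hae : ∀ᵐ x : ℝ, x ≠ (2:ℝ) := by
      rw [MeasureTheory.ae_iff]
      simp only [Ne, not_not]
      exact Real.volume_singleton
    filter_upwards [hae] with x hx hmem
    rw [Set.uIoc_of_le (by norm_num)] at hmem
    obtain ⟨h1, h2⟩ := hmem
    have hxn : x ∉ Set.Ico ((i:ℕ)+1 : ℝ) ((i:ℕ)+2) := by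
      rintro ⟨ha, -⟩
      have : (1:ℝ) ≤ (i:ℕ) := by exact_mod_cast Nat.one_le_iff_ne_zero.mpr hi
      have : x < 2 := lt_of_le_of_ne h2 hx
      linarith
    rw [ind, Set.indicator_of_notMem hxn]
  rw [hcong]
  simp

lemma sum_ind_le_one (θ : ℝ) : ∑ i : Fin k, ind i θ ≤ 1 := by
  classical
  have hrw : ∀ i : Fin k, ind i θ =
      if θ ∈ Set.Ico ((i:ℕ)+1 : ℝ) ((i:ℕ)+2) then (1:ℝ) else 0 := by
    intro i
    rw [ind, Set.indicator_apply]
    split_ifs <;> rfl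
  simp only [hrw]
  have hcard : (Finset.univ.filter
      fun i : Fin k => θ ∈ Set.Ico ((i:ℕ)+1:ℝ) ((i:ℕ)+2)).card ≤ 1 := by
    refine Finset.card_le_one.mpr ?_
    intro a ha b hb
    simp only [Finset.mem_filter, Set.mem_Ico] at ha hb
    obtain ⟨-, h1, h2⟩ := ha
    obtain ⟨-, h3, h4⟩ := hb
    have hab : ((a:ℕ):ℝ) < (b:ℕ)+1 := by linarith
    have hba : ((b:ℕ):ℝ) < (a:ℕ)+1 := by linarith
    have hab' : (a:ℕ) < (b:ℕ)+1 := by exact_mod_cast hab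
    have hba' : (b:ℕ) < (a:ℕ)+1 := by exact_mod_cast hba
    exact Fin.ext (by omega)
  rw [Finset.sum_ite, Finset.sum_const_zero, add_zero, Finset.sum_const,
    nsmul_eq_mul, mul_one]
  exact_mod_cast hcard


lemma costAt_eq (y : List (Option (Fin k × Fin k)) → ℝ)
    (hy : ∀ p, y p ≠ 0 → ∃ i, p = pathOf k i) (θ : ℝ) :
    (N₂ k).costAt ((N₂ k).trRate y ((k + 2 : ℕ) : ℝ)) θ =
      ∑ i : Fin k, y (pathOf k i) * ∫ ξ in (θ-1)..θ, ind i ξ := by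
  unfold Network.costAt
  rw [Fintype.sum_option]
  have hc0 : ((N₂ k).c none : ℝ) = 0 := by simp [N₂]
  rw [hc0, zero_mul, zero_add]
  rw [Fintype.sum_prod_type]
  refine Finset.sum_congr rfl fun i _ => ?_
  rw [Finset.sum_eq_single i]
  · have hc1 : ((N₂ k).c (some (i,i)) : ℝ) = 1 := by simp [N₂]
    have hτ : ((N₂ k).τ (some (i,i)) : ℝ) = 1 := by simp [N₂]
    rw [hc1, one_mul, hτ]
    rw [intervalIntegral.integral_congr (g := fun ξ => y (pathOf k i) * ind i ξ)
      (fun ξ _ => trRate_eq y hy i ξ)]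
    rw [intervalIntegral.integral_const_mul]
  · intro j _ hj
    have hne : (j:ℕ) ≠ (i:ℕ) := fun h => hj (Fin.ext h)
    have : ((N₂ k).c (some (i,j)) : ℝ) = 0 := by simp [N₂, hne]
    rw [this, zero_mul]
  · simp


lemma sumJ_le_one (θ : ℝ) : ∑ i : Fin k, (∫ ξ in (θ-1)..θ, ind i ξ) ≤ 1 := by
  have h1 : IntervalIntegrable (∑ i : Fin k, ind i) volume (θ-1) θ :=
    IntervalIntegrable.sum Finset.univ (fun i _ => ind_intervalIntegrable i (θ-1) θ)
  calc ∑ i : Fin k, (∫ ξ in (θ-1)..θ, ind i ξ)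
      = ∫ ξ in (θ-1)..θ, (∑ i : Fin k, ind i ξ) :=
        (intervalIntegral.integral_finset_sum (μ := volume) (s := Finset.univ)
          (f := fun i ξ => ind i ξ) (fun i _ => ind_intervalIntegrable i (θ-1) θ)).symm
    _ = ∫ ξ in (θ-1)..θ, (∑ i : Fin k, ind i) ξ :=
        intervalIntegral.integral_congr (fun ξ _ => (Finset.sum_apply ξ Finset.univ _).symm)
    _ ≤ ∫ _ξ in (θ-1)..θ, (1:ℝ) :=
        intervalIntegral.integral_mono_on (by linarith) h1 intervalIntegrable_const
          (fun x _ => by rw [Finset.sum_apply]; exact sum_ind_le_one x)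
    _ = 1 := by simp

end Stmt2
/-- for every `k ≥ 1`, in the network `N₂ k` (which has
`n = k(k-1) + 3` nodes) with time horizon `T = k + 2` and demand `D = 1`, every
integral temporally repeated flow of value `1` has peak cost exactly `1`, while some
fractional temporally repeated flow of value `1` has peak cost `1/k`.  Hence the
integrality gap is at least `k ∈ Ω(√n)`. -/
theorem stmt2 (k : ℕ) (hk : 1 ≤ k) :
    (∀ y : List (Option (Fin k × Fin k)) → ℝ,
      (N₂ k).IsDecomposition y → IsIntegral y →
      (N₂ k).trValue y ((k + 2 : ℕ) : ℝ) = 1 →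
      (N₂ k).trPeakCost y ((k + 2 : ℕ) : ℝ) = 1) ∧
    (∃ y : List (Option (Fin k × Fin k)) → ℝ,
      (N₂ k).IsDecomposition y ∧
      (N₂ k).trValue y ((k + 2 : ℕ) : ℝ) = 1 ∧
      (N₂ k).trPeakCost y ((k + 2 : ℕ) : ℝ) = 1 / k) := by
  have hk0 : ((k:ℕ) : ℝ) ≠ 0 := Nat.cast_ne_zero.mpr (by omega)
  have hk1 : (1:ℝ) ≤ (k : ℕ) := by exact_mod_cast hk
  constructor
  · -- integral case
    intro y hdec hint hval
    have hy : ∀ p, y p ≠ 0 → ∃ i, p = Stmt2.pathOf k i :=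
      fun p hp => Stmt2.isSTPath_iff.mp (hdec.2.1 p hp)
    choose n hn using hint
    have hsum : ∑ i : Fin k, y (Stmt2.pathOf k i) = 1 := by
      rw [← Stmt2.trValue_eq y hy]; exact hval
    have hsum' : ∑ i : Fin k, n (Stmt2.pathOf k i) = 1 := by
      have hc : ((∑ i : Fin k, n (Stmt2.pathOf k i) : ℕ) : ℝ) = 1 := by
        push_cast
        rw [← hsum]
        exact Finset.sum_congr rfl fun i _ => (hn _).symm
      exact_mod_cast hc
    obtain ⟨i₀, hi₀, hrest⟩ : ∃ i₀, n (Stmt2.pathOf k i₀) = 1 ∧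
        ∀ i, i ≠ i₀ → n (Stmt2.pathOf k i) = 0 := by
      obtain ⟨i₀, hne⟩ : ∃ i₀, n (Stmt2.pathOf k i₀) ≠ 0 := by
        by_contra hall
        push_neg at hall
        rw [Finset.sum_eq_zero (fun i _ => hall i)] at hsum'
        omega
      have hsplit : n (Stmt2.pathOf k i₀) +
          ∑ i ∈ Finset.univ.erase i₀, n (Stmt2.pathOf k i) = 1 := by
        rw [Finset.add_sum_erase Finset.univ
          (fun i => n (Stmt2.pathOf k i)) (Finset.mem_univ i₀)]
        exact hsum'
      have hz : ∑ i ∈ Finset.univ.erase i₀, n (Stmt2.pathOf k i) = 0 := by omega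
      refine ⟨i₀, by omega, fun i hi => ?_⟩
      exact Finset.sum_eq_zero_iff.mp hz i (Finset.mem_erase.mpr ⟨hi, Finset.mem_univ i⟩)
    have hy0 : y (Stmt2.pathOf k i₀) = 1 := by rw [hn _, hi₀]; norm_num
    have hyi : ∀ i, i ≠ i₀ → y (Stmt2.pathOf k i) = 0 := fun i hi => by
      rw [hn _, hrest i hi]; norm_num
    have hcost : ∀ θ : ℝ, (N₂ k).costAt ((N₂ k).trRate y ((k+2:ℕ):ℝ)) θ =
        ∫ ξ in (θ-1)..θ, Stmt2.ind i₀ ξ := by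
      intro θ
      rw [Stmt2.costAt_eq y hy θ, Finset.sum_eq_single i₀]
      · rw [hy0, one_mul]
      · intro i _ hi; rw [hyi i hi, zero_mul]
      · simp
    unfold Network.trPeakCost Network.peakCost
    apply le_antisymm
    · refine Real.sSup_le ?_ zero_le_one
      rintro x ⟨θ, -, rfl⟩
      rw [hcost θ]; exact Stmt2.J_le_one i₀ θ
    · apply le_csSup
      · refine ⟨1, ?_⟩
        rintro x ⟨θ, -, rfl⟩
        rw [hcost θ]; exact Stmt2.J_le_one i₀ θ
      · refine ⟨((i₀:ℕ)+2:ℝ), Set.mem_Ico.mpr ⟨by positivity, ?_⟩, ?_⟩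
        · have := i₀.isLt; push_cast; exact_mod_cast by linarith [(Nat.cast_lt (α := ℝ)).mpr this]
        · rw [hcost _]; exact Stmt2.J_peak i₀
  · -- fractional case
    classical
    refine ⟨(Set.range (Stmt2.pathOf k)).indicator (fun _ => 1 / (k:ℕ)), ?_, ?_, ?_⟩
    all_goals
      set y : List (Option (Fin k × Fin k)) → ℝ :=
        (Set.range (Stmt2.pathOf k)).indicator (fun _ => 1 / (k:ℕ)) with hydef
    all_goals
      have hyi : ∀ i : Fin k, y (Stmt2.pathOf k i) = 1 / (k:ℕ) := fun i =>
        Set.indicator_of_mem (Set.mem_range_self i) _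
      have hy : ∀ p, y p ≠ 0 → ∃ i, p = Stmt2.pathOf k i := by
        intro p hp
        by_contra hc
        push_neg at hc
        exact hp (Set.indicator_of_notMem
          (by simpa [Set.mem_range, eq_comm] using fun i => hc i) _)
      have hsumc : ∑ _i : Fin k, (1 / (k:ℕ) : ℝ) = 1 := by
        rw [Finset.sum_const, Finset.card_univ, Fintype.card_fin, nsmul_eq_mul]
        field_simp
    · -- decomposition
      refine ⟨fun p => Set.indicator_nonneg (fun _ _ => by positivity) p,
        fun p hp => Stmt2.isSTPath_iff.mpr (hy p hp), ?_, ?_⟩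
      · refine Set.Finite.subset (Set.finite_range (Stmt2.pathOf k)) ?_
        intro p hp
        obtain ⟨i, rfl⟩ := hy p hp
        exact Set.mem_range_self i
      · intro a
        have hu : ((N₂ k).u a : ℝ) = 1 := by simp [N₂]
        rw [hu]
        unfold Network.staticOf
        rw [Stmt2.finsum_mem_paths y hy _]
        calc ∑ i : Fin k, ({p | a ∈ p}).indicator y (Stmt2.pathOf k i)
            ≤ ∑ _i : Fin k, (1 / (k:ℕ) : ℝ) := by
              refine Finset.sum_le_sum fun i _ => ?_
              by_cases hm : Stmt2.pathOf k i ∈ {p : List (Option (Fin k × Fin k)) | a ∈ p}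
              · rw [Set.indicator_of_mem hm, hyi]
              · rw [Set.indicator_of_notMem hm]; positivity
          _ = 1 := hsumc
    · -- value
      rw [Stmt2.trValue_eq y hy]
      rw [Finset.sum_congr rfl fun i _ => hyi i]
      exact hsumc
    · -- peak cost
      have hcost : ∀ θ : ℝ, (N₂ k).costAt ((N₂ k).trRate y ((k+2:ℕ):ℝ)) θ =
          (1/(k:ℕ) : ℝ) * ∑ i : Fin k, ∫ ξ in (θ-1)..θ, Stmt2.ind i ξ := by
        intro θ
        rw [Stmt2.costAt_eq y hy θ, Finset.mul_sum]
        exact Finset.sum_congr rfl fun i _ => by rw [hyi i]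
      unfold Network.trPeakCost Network.peakCost
      apply le_antisymm
      · refine Real.sSup_le ?_ (by positivity)
        rintro x ⟨θ, -, rfl⟩
        rw [hcost θ]
        have h1 := Stmt2.sumJ_le_one (k := k) θ
        have h2 : (0:ℝ) ≤ 1/(k:ℕ) := by positivity
        calc (1/(k:ℕ) : ℝ) * ∑ i : Fin k, ∫ ξ in (θ-1)..θ, Stmt2.ind i ξ
            ≤ (1/(k:ℕ) : ℝ) * 1 := by
              exact mul_le_mul_of_nonneg_left h1 h2
          _ = 1/(k:ℕ) := mul_one _
      · apply le_csSup
        · refine ⟨1/(k:ℕ), ?_⟩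
          rintro x ⟨θ, -, rfl⟩
          rw [hcost θ]
          have h1 := Stmt2.sumJ_le_one (k := k) θ
          have h2 : (0:ℝ) ≤ 1/(k:ℕ) := by positivity
          calc (1/(k:ℕ) : ℝ) * ∑ i : Fin k, ∫ ξ in (θ-1)..θ, Stmt2.ind i ξ
              ≤ (1/(k:ℕ) : ℝ) * 1 := mul_le_mul_of_nonneg_left h1 h2
            _ = 1/(k:ℕ) := mul_one _
        · refine ⟨(2:ℝ), Set.mem_Ico.mpr ⟨by norm_num, ?_⟩, ?_⟩
          · push_cast; linarith
          · rw [hcost 2]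
            have hz : ∀ i : Fin k, i ≠ (⟨0, by omega⟩ : Fin k) →
                (∫ ξ in ((2:ℝ)-1)..(2:ℝ), Stmt2.ind i ξ) = 0 := by
              intro i hi
              exact Stmt2.J_two_of_ne i (fun h0 => hi (Fin.ext h0))
            rw [Finset.sum_eq_single (⟨0, by omega⟩ : Fin k)
              (fun i _ hi => hz i hi) (by simp)]
            have hp := Stmt2.J_peak (k := k) ⟨0, by omega⟩
            norm_num at hp ⊢
            rw [hp, mul_one]
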